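/- Let (P, ≤, ', ⊥, ⊤) be a bounded strictly modular poset with a complementation ' (i.e., U(x,x') = {⊤} and L(x,x') = {⊥} for all x). Define M(x,y) := L(U(x,y') ∪ {y}) and R(x,y) := L(U(L(x,y) ∪ {x'})). Then for all a, b, c ∈ P: M(a,b) ⊆ L({c}) if and only if L({a}) ⊆ R(b,c) (operator left adjointness). -/
import Mathlib


/-- In a bounded strictly modular poset with complementation `n`,
with `M(x,y) := L(U(x, n y) ∪ {y})` and `R(x,y) := L(U(L(x,y) ∪ {n x}))`,
operator left adjointness holds: `M(a,b) ⊆ L({c}) ↔ L({a}) ⊆ R(b,c)`. -/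
theorem stmt_11 {P : Type*} [PartialOrder P] [BoundedOrder P] (n : P → P)
    (h1 : ∀ (x y : P) (Z : Set P), x ∈ lowerBounds Z →
      lowerBounds (upperBounds {x, y} ∪ Z) =
        lowerBounds (upperBounds ({x} ∪ lowerBounds ({y} ∪ Z))))
    (h2 : ∀ (y z : P) (X : Set P), (∀ w ∈ lowerBounds X, w ≤ z) →
      lowerBounds (upperBounds (lowerBounds X ∪ {y}) ∪ {z}) =
        lowerBounds (upperBounds (lowerBounds X ∪ lowerBounds {y, z})))
    (hU : ∀ x : P, upperBounds {x, n x} = {⊤})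
    (hL : ∀ x : P, lowerBounds {x, n x} = {⊥}) :
    ∀ a b c : P,
      lowerBounds (upperBounds {a, n b} ∪ {b}) ⊆ lowerBounds {c} ↔
        lowerBounds {a} ⊆ lowerBounds (upperBounds (lowerBounds {b, c} ∪ {n b})) := by
  intro a b c
  constructor
  · intro h
    -- `n b` is a lower bound of `U{a, n b}`
    have hnb : n b ∈ lowerBounds (upperBounds ({a, n b} : Set P)) := by
      intro u hu; exact hu (by simp)
    have key := h1 (n b) b (upperBounds {a, n b}) hnb
    have hTop : upperBounds ({n b, b} : Set P) = {⊤} := by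
      rw [Set.pair_comm]; exact hU b
    -- hence `a ∈ L(U(M(a,b) ∪ {n b}))`
    have haR' : a ∈ lowerBounds
        (upperBounds ({n b} ∪ lowerBounds ({b} ∪ upperBounds {a, n b}))) := by
      rw [← key, hTop]
      rintro u (rfl | hu)
      · exact le_top
      · exact hu (by simp)
    have hset : ({b} ∪ upperBounds {a, n b} : Set P) = upperBounds {a, n b} ∪ {b} :=
      Set.union_comm _ _
    rw [hset] at haR'
    have hset2 : ({n b} ∪ lowerBounds (upperBounds {a, n b} ∪ {b}) : Set P)
        = lowerBounds (upperBounds {a, n b} ∪ {b}) ∪ {n b} := Set.union_comm _ _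
    rw [hset2] at haR'
    -- `M(a,b) ⊆ L{b,c}`
    have hMsub : lowerBounds (upperBounds {a, n b} ∪ {b}) ⊆ lowerBounds ({b, c} : Set P) := by
      intro w hw x hx
      rcases hx with rfl | hx
      · exact hw (Set.mem_union_right _ rfl)
      · rcases hx with rfl
        exact h hw rfl
    have hUsub : upperBounds (lowerBounds ({b, c} : Set P) ∪ {n b})
        ⊆ upperBounds (lowerBounds (upperBounds {a, n b} ∪ {b}) ∪ {n b}) :=
      upperBounds_mono_set (Set.union_subset_union_left _ hMsub)
    have haR : a ∈ lowerBounds (upperBounds (lowerBounds ({b, c} : Set P) ∪ {n b})) :=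
      fun u hu => haR' (hUsub hu)
    intro w hw
    have hwa : w ≤ a := hw rfl
    exact fun u hu => le_trans hwa (haR hu)
  · intro h
    have haR : a ∈ lowerBounds (upperBounds (lowerBounds ({b, c} : Set P) ∪ {n b})) :=
      h (fun x hx => le_of_eq hx.symm)
    have hcond : ∀ w ∈ lowerBounds ({b, c} : Set P), w ≤ b := fun w hw => hw (by simp)
    have star := h2 (n b) b ({b, c} : Set P) hcond
    have hBot : lowerBounds ({n b, b} : Set P) = {⊥} := by
      rw [Set.pair_comm]; exact hL b
    rw [hBot] at star
    intro w hw
    have hw1 : w ∈ lowerBounds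
        (upperBounds (lowerBounds ({b, c} : Set P) ∪ {n b}) ∪ {b}) := by
      rintro u (hu | rfl)
      · apply hw
        left
        intro x hx
        rcases hx with rfl | hx
        · exact haR hu
        · rcases hx with rfl
          exact hu (Set.mem_union_right _ rfl)
      · exact hw (Set.mem_union_right _ rfl)
    rw [star] at hw1
    have hwc : w ≤ c := hw1 (by
      rintro x (hx | rfl)
      · exact hx (by simp)
      · exact bot_le)
    rintro x rfl
    exact hwc
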